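/- Let N and K be positive integers, let D be an invertible real N×N matrix with D·Dᵀ ⪯ I (i.e., I − D·Dᵀ is positive semidefinite), let H_1, ..., H_K be real N×N matrices, and set H_{k,e} = D·H_k for each k. For real symmetric positive semidefinite N×N matrices X_1, ..., X_K define f(X_1, ..., X_K) = (1/2)·log det(I + Σ_{k=1}^{K} H_k X_k H_kᵀ) − (1/2)·log det(I + Σ_{k=1}^{K} H_{k,e} X_k H_{k,e}ᵀ). Then f is monotone with respect to the positive semidefinite order: for any positive semidefinite X_1, ..., X_K and any positive semidefinite Δ_1, ..., Δ_K, f(X_1, ..., X_K) ≤ f(X_1 + Δ_1, ..., X_K + Δ_K). -/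

import Mathlib

open Matrix

set_option linter.unusedSectionVars false
set_option maxHeartbeats 1000000

section Helpers
variable {m : Type*} [Fintype m] [DecidableEq m]

section SqrtCompat
open scoped MatrixOrder

noncomputable def Matrix.PosSemidef.sqrt {A : Matrix m m ℝ} (_hA : A.PosSemidef) :
    Matrix m m ℝ :=
  CFC.sqrt A

lemma Matrix.PosSemidef.posSemidef_sqrt {A : Matrix m m ℝ} (hA : A.PosSemidef) :
    hA.sqrt.PosSemidef :=
  Matrix.nonneg_iff_posSemidef.mp (CFC.sqrt_nonneg A)

lemma Matrix.PosSemidef.sqrt_mul_self {A : Matrix m m ℝ} (hA : A.PosSemidef) :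
    hA.sqrt * hA.sqrt = A :=
  CFC.sqrt_mul_sqrt_self A (Matrix.nonneg_iff_posSemidef.mpr hA)

end SqrtCompat

lemma psdConj {A : Matrix m m ℝ} (hA : A.PosSemidef) (B : Matrix m m ℝ) :
    (B * A * Bᵀ).PosSemidef := by
  simpa [conjTranspose_eq_transpose_of_trivial] using hA.mul_mul_conjTranspose_same B

lemma posDefConj {A B : Matrix m m ℝ} (hA : A.PosDef) (hB : IsUnit B.det) :
    (B * A * Bᵀ).PosDef := by
  refine Matrix.PosDef.of_dotProduct_mulVec_pos (psdConj hA.posSemidef B).1 fun x hx => ?_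
  have hBT : IsUnit (Bᵀ : Matrix m m ℝ) :=
    (Matrix.isUnit_iff_isUnit_det _).2 (by simpa using hB)
  have hx' : Bᵀ *ᵥ x ≠ 0 :=
    (Matrix.mulVec_injective_iff_isUnit.mpr hBT |>.ne_iff' (by simp)).2 hx
  have h := hA.dotProduct_mulVec_pos hx'
  have hBB : B * A * Bᵀ = (Bᵀ)ᴴ * A * Bᵀ := by
    simp [conjTranspose_eq_transpose_of_trivial]
  rw [hBB]
  simpa only [star_mulVec, dotProduct_mulVec, vecMul_vecMul, Matrix.mul_assoc] using h

lemma det_one_add_psd {M : Matrix m m ℝ} (hM : M.PosSemidef) : 1 ≤ (1 + M).det := by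
  have h := hM.1.spectral_theorem
  simp only [Unitary.conjStarAlgAut_apply, Unitary.coe_star] at h
  set U := (hM.1.eigenvectorUnitary : Matrix m m ℝ) with hU
  have hUU : U * star U = 1 := Matrix.mem_unitaryGroup_iff.mp hM.1.eigenvectorUnitary.2
  have h1 : (1 : Matrix m m ℝ) + M
      = U * (1 + diagonal (RCLike.ofReal ∘ hM.1.eigenvalues)) * star U := by
    rw [Matrix.mul_add, Matrix.add_mul, Matrix.mul_one, hUU, ← h]
  rw [h1, det_mul, det_mul, mul_comm, ← mul_assoc, ← det_mul, mul_eq_one_comm.mp hUU]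
  simp only [det_one, one_mul]
  have : (1 : Matrix m m ℝ) + diagonal (RCLike.ofReal ∘ hM.1.eigenvalues)
      = diagonal (fun i => 1 + hM.1.eigenvalues i) := by
    rw [← diagonal_one, diagonal_add]
    congr 1
  rw [this, det_diagonal]
  calc (1:ℝ) = ∏ _i : m, 1 := by simp
    _ ≤ ∏ i : m, (1 + hM.1.eigenvalues i) :=
      Finset.prod_le_prod (by simp) (fun i _ => by have := hM.eigenvalues_nonneg i; linarith)

lemma sqrt_symm {A : Matrix m m ℝ} (hA : A.PosSemidef) : hA.sqrtᵀ = hA.sqrt := by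
  simpa [conjTranspose_eq_transpose_of_trivial, IsSymm] using hA.posSemidef_sqrt.1

lemma sqrt_det_isUnit {A : Matrix m m ℝ} (hA : A.PosDef) :
    IsUnit hA.posSemidef.sqrt.det := by
  have h2 : hA.posSemidef.sqrt.det * hA.posSemidef.sqrt.det = A.det := by
    rw [← det_mul, hA.posSemidef.sqrt_mul_self]
  have := hA.det_pos
  exact isUnit_iff_ne_zero.2 (fun h => by rw [h, mul_zero] at h2; linarith)

lemma detMono {A B : Matrix m m ℝ} (hA : A.PosDef) (hBA : (B - A).PosSemidef) :
    A.det ≤ B.det := by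
  set F := hA.posSemidef.sqrt with hF
  have hFQ : F * F = A := hA.posSemidef.sqrt_mul_self
  have hFsymm : Fᵀ = F := sqrt_symm hA.posSemidef
  have hFdet : IsUnit F.det := sqrt_det_isUnit hA
  have h1 : F * F⁻¹ = 1 := mul_nonsing_inv _ hFdet
  have h2 : F⁻¹ * F = 1 := nonsing_inv_mul _ hFdet
  have hFinvsymm : (F⁻¹)ᵀ = F⁻¹ := by rw [transpose_nonsing_inv, hFsymm]
  have hB : B = F * (1 + F⁻¹ * (B - A) * F⁻¹) * F := by
    have e : F * (F⁻¹ * (B - A) * F⁻¹) * F = (F * F⁻¹) * ((B - A) * (F⁻¹ * F)) := by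
      simp only [Matrix.mul_assoc]
    rw [Matrix.mul_add, Matrix.add_mul, Matrix.mul_one, hFQ, e, h1, h2, Matrix.one_mul,
      Matrix.mul_one]
    abel
  have hpsd : (F⁻¹ * (B - A) * F⁻¹).PosSemidef := by
    have := psdConj hBA F⁻¹
    rwa [hFinvsymm] at this
  have hdet1 : 1 ≤ (1 + F⁻¹ * (B - A) * F⁻¹).det := det_one_add_psd hpsd
  have hFF : F.det * F.det = A.det := by rw [← det_mul, hFQ]
  have hcalc : B.det = A.det * (1 + F⁻¹ * (B - A) * F⁻¹).det := by
    conv_lhs => rw [hB]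
    rw [det_mul, det_mul, mul_right_comm, hFF]
  rw [hcalc]
  nlinarith [hA.det_pos]

lemma one_sub_inv_psd {C : Matrix m m ℝ} (hC : C.PosDef) (h1 : (C - 1).PosSemidef) :
    ((1 : Matrix m m ℝ) - C⁻¹).PosSemidef := by
  have hCi : (C⁻¹).PosDef := hC.inv
  set G := hCi.posSemidef.sqrt with hG
  have hGG : G * G = C⁻¹ := hCi.posSemidef.sqrt_mul_self
  have hGsymm : Gᵀ = G := sqrt_symm hCi.posSemidef
  have hGdet : IsUnit G.det := sqrt_det_isUnit hCi
  have hGinv : G⁻¹ * G⁻¹ = C := by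
    rw [← Matrix.mul_inv_rev, hGG, Matrix.nonsing_inv_nonsing_inv _ hC.det_pos.ne'.isUnit]
  have e1 : G * C * G = 1 := by
    rw [← hGinv]
    have e : G * (G⁻¹ * G⁻¹) * G = (G * G⁻¹) * (G⁻¹ * G) := by simp only [Matrix.mul_assoc]
    rw [e, mul_nonsing_inv _ hGdet, nonsing_inv_mul _ hGdet, Matrix.one_mul]
  have key : (1 : Matrix m m ℝ) - C⁻¹ = G * (C - 1) * G := by
    rw [Matrix.mul_sub, Matrix.sub_mul, Matrix.mul_one, e1, hGG]
  rw [key]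
  have := psdConj h1 G
  rwa [hGsymm] at this

lemma inv_anti {A B : Matrix m m ℝ} (hA : A.PosDef) (hB : B.PosDef)
    (hAB : (B - A).PosSemidef) : (A⁻¹ - B⁻¹).PosSemidef := by
  set F := hA.posSemidef.sqrt with hF
  have hFQ : F * F = A := hA.posSemidef.sqrt_mul_self
  have hFsymm : Fᵀ = F := sqrt_symm hA.posSemidef
  have hFdet : IsUnit F.det := sqrt_det_isUnit hA
  have h1 : F * F⁻¹ = 1 := mul_nonsing_inv _ hFdet
  have h2 : F⁻¹ * F = 1 := nonsing_inv_mul _ hFdet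
  have hFinvsymm : (F⁻¹)ᵀ = F⁻¹ := by rw [transpose_nonsing_inv, hFsymm]
  have hAinv : F⁻¹ * F⁻¹ = A⁻¹ := by rw [← Matrix.mul_inv_rev, hFQ]
  have hFidet : IsUnit (F⁻¹).det := F.isUnit_nonsing_inv_det hFdet
  have hCpd : (F⁻¹ * B * F⁻¹).PosDef := by
    have := posDefConj hB hFidet
    rwa [hFinvsymm] at this
  have hC1 : (F⁻¹ * B * F⁻¹ - 1).PosSemidef := by
    have e : F⁻¹ * B * F⁻¹ - 1 = F⁻¹ * (B - A) * F⁻¹ := by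
      rw [Matrix.mul_sub, Matrix.sub_mul]
      congr 1
      rw [← hFQ]
      have e2 : F⁻¹ * (F * F) * F⁻¹ = (F⁻¹ * F) * (F * F⁻¹) := by simp only [Matrix.mul_assoc]
      rw [e2, h2, h1, Matrix.one_mul]
    rw [e]
    have := psdConj hAB F⁻¹
    rwa [hFinvsymm] at this
  have h2' := one_sub_inv_psd hCpd hC1
  have hCinv : (F⁻¹ * B * F⁻¹)⁻¹ = F * B⁻¹ * F := by
    simp only [Matrix.mul_inv_rev, Matrix.nonsing_inv_nonsing_inv F hFdet]
    simp only [Matrix.mul_assoc]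
  have final : A⁻¹ - B⁻¹ = F⁻¹ * (1 - (F⁻¹ * B * F⁻¹)⁻¹) * F⁻¹ := by
    rw [Matrix.mul_sub, Matrix.sub_mul, Matrix.mul_one, hAinv, hCinv]
    congr 1
    have e3 : F⁻¹ * (F * B⁻¹ * F) * F⁻¹ = (F⁻¹ * F) * (B⁻¹ * (F * F⁻¹)) := by
      simp only [Matrix.mul_assoc]
    rw [e3, h2, h1, Matrix.one_mul, Matrix.mul_one]
  rw [final]
  have := psdConj h2' F⁻¹
  rwa [hFinvsymm] at this

lemma det_add_mul_self {Q : Matrix m m ℝ} (hQ : Q.PosDef) (V : Matrix m m ℝ) :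
    (Q + V * Vᵀ).det = Q.det * (1 + Vᵀ * Q⁻¹ * V).det := by
  set F := hQ.posSemidef.sqrt with hF
  have hFQ : F * F = Q := hQ.posSemidef.sqrt_mul_self
  have hFdet : IsUnit F.det := sqrt_det_isUnit hQ
  have h1 : F * F⁻¹ = 1 := mul_nonsing_inv _ hFdet
  have h2 : F⁻¹ * F = 1 := nonsing_inv_mul _ hFdet
  have hQinv : F⁻¹ * F⁻¹ = Q⁻¹ := by rw [← Matrix.mul_inv_rev, hFQ]
  have hB : Q + V * Vᵀ = F * (1 + (F⁻¹ * V) * (Vᵀ * F⁻¹)) * F := by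
    rw [Matrix.mul_add, Matrix.add_mul, Matrix.mul_one, hFQ]
    congr 1
    have e : F * ((F⁻¹ * V) * (Vᵀ * F⁻¹)) * F = (F * F⁻¹) * ((V * Vᵀ) * (F⁻¹ * F)) := by
      simp only [Matrix.mul_assoc]
    rw [e, h1, h2, Matrix.one_mul, Matrix.mul_one]
  have hFF : F.det * F.det = Q.det := by rw [← det_mul, hFQ]
  have harg : (Vᵀ * F⁻¹) * (F⁻¹ * V) = Vᵀ * Q⁻¹ * V := by
    rw [← hQinv]
    simp only [Matrix.mul_assoc]
  rw [hB, det_mul, det_mul, det_one_add_mul_comm, harg, mul_right_comm, hFF]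

lemma psd_sum {ι : Type*} (s : Finset ι) (f : ι → Matrix m m ℝ)
    (h : ∀ k ∈ s, (f k).PosSemidef) : (∑ k ∈ s, f k).PosSemidef :=
  Finset.sum_induction f _ (fun _ _ ha hb => ha.add hb) Matrix.PosSemidef.zero h

end Helpers

/-- The secrecy-sum-rate function
`f(X₁, …, X_K) = ½ log det(I + ∑ₖ Hₖ Xₖ Hₖᵀ) − ½ log det(I + ∑ₖ H_{k,e} Xₖ H_{k,e}ᵀ)`
with `H_{k,e} = D * Hₖ`. -/
noncomputable def secf {N K : ℕ} (D : Matrix (Fin N) (Fin N) ℝ)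
    (H : Fin K → Matrix (Fin N) (Fin N) ℝ) (X : Fin K → Matrix (Fin N) (Fin N) ℝ) : ℝ :=
  (1 / 2) * Real.log (1 + ∑ k, H k * X k * (H k)ᵀ).det
    - (1 / 2) * Real.log (1 + ∑ k, (D * H k) * X k * (D * H k)ᵀ).det

theorem stmt5 {N K : ℕ} (hN : 0 < N) (hK : 0 < K)
    (D : Matrix (Fin N) (Fin N) ℝ) (hD : IsUnit D.det)
    (hDD : (1 - D * Dᵀ).PosSemidef)
    (H : Fin K → Matrix (Fin N) (Fin N) ℝ)
    (X Δ : Fin K → Matrix (Fin N) (Fin N) ℝ)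
    (hX : ∀ k, (X k).PosSemidef) (hΔ : ∀ k, (Δ k).PosSemidef) :
    secf D H X ≤ secf D H (fun k => X k + Δ k) := by
  classical
  set S := ∑ k, H k * X k * (H k)ᵀ with hSdef
  set T := ∑ k, H k * Δ k * (H k)ᵀ with hTdef
  have hS : S.PosSemidef := psd_sum _ _ (fun k _ => psdConj (hX k) (H k))
  have hT : T.PosSemidef := psd_sum _ _ (fun k _ => psdConj (hΔ k) (H k))
  have hDt : IsUnit (Dᵀ).det := by rwa [det_transpose]
  -- the sums for the eavesdropper channel
  have he : ∀ (Y : Fin K → Matrix (Fin N) (Fin N) ℝ),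
      ∑ k, (D * H k) * Y k * (D * H k)ᵀ = D * (∑ k, H k * Y k * (H k)ᵀ) * Dᵀ := by
    intro Y
    rw [Finset.mul_sum, Finset.sum_mul]
    refine Finset.sum_congr rfl fun k _ => ?_
    rw [transpose_mul]
    simp only [Matrix.mul_assoc]
  have hXΔ : ∑ k, H k * (X k + Δ k) * (H k)ᵀ = S + T := by
    rw [hSdef, hTdef, ← Finset.sum_add_distrib]
    exact Finset.sum_congr rfl fun k _ => by rw [Matrix.mul_add, Matrix.add_mul]
  set P := (1 : Matrix (Fin N) (Fin N) ℝ) + S with hPdef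
  set E := (1 : Matrix (Fin N) (Fin N) ℝ) + D * S * Dᵀ with hEdef
  have hP : P.PosDef := Matrix.PosDef.one.add_posSemidef hS
  have hE : E.PosDef := Matrix.PosDef.one.add_posSemidef (psdConj hS D)
  -- key comparison of inverses
  have hkey : (P⁻¹ - Dᵀ * E⁻¹ * D).PosSemidef := by
    have hDP : (D * P * Dᵀ).PosDef := posDefConj hP hD
    have hEDP : (E - D * P * Dᵀ).PosSemidef := by
      have e : E - D * P * Dᵀ = 1 - D * Dᵀ := by
        rw [hEdef, hPdef]
        simp only [Matrix.mul_add, Matrix.add_mul, Matrix.mul_one]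
        abel
      rw [e]; exact hDD
    have hia := inv_anti hDP hE hEDP
    have hconj := psdConj hia Dᵀ
    rw [transpose_transpose] at hconj
    have e2 : Dᵀ * ((D * P * Dᵀ)⁻¹ - E⁻¹) * D = P⁻¹ - Dᵀ * E⁻¹ * D := by
      rw [Matrix.mul_sub, Matrix.sub_mul]
      congr 1
      simp only [Matrix.mul_inv_rev]
      have e3 : Dᵀ * ((Dᵀ)⁻¹ * (P⁻¹ * D⁻¹)) * D = (Dᵀ * (Dᵀ)⁻¹) * (P⁻¹ * (D⁻¹ * D)) := by
        simp only [Matrix.mul_assoc]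
      rw [e3, mul_nonsing_inv _ hDt, nonsing_inv_mul _ hD, Matrix.one_mul, Matrix.mul_one]
    rwa [e2] at hconj
  -- square root of T
  set R := hT.sqrt with hR
  have hRR : R * R = T := hT.sqrt_mul_self
  have hRsymm : Rᵀ = R := sqrt_symm hT
  -- determinant decompositions
  have hdet1 : (P + T).det = P.det * (1 + R * P⁻¹ * R).det := by
    have e : T = R * Rᵀ := by rw [hRsymm, hRR]
    rw [e, det_add_mul_self hP R, hRsymm]
  have hdet2 : (E + D * T * Dᵀ).det = E.det * (1 + R * (Dᵀ * E⁻¹ * D) * R).det := by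
    have e : D * T * Dᵀ = (D * R) * (D * R)ᵀ := by
      rw [transpose_mul, hRsymm, ← hRR]
      simp only [Matrix.mul_assoc]
    rw [e, det_add_mul_self hE (D * R), transpose_mul, hRsymm]
    have e4 : R * Dᵀ * E⁻¹ * (D * R) = R * (Dᵀ * E⁻¹ * D) * R := by
      simp only [Matrix.mul_assoc]
    rw [e4]
  -- positivity and monotonicity facts
  have hc_psd : (R * P⁻¹ * R).PosSemidef := by
    have := psdConj hP.inv.posSemidef R; rwa [hRsymm] at this
  have hce_psd : (R * (Dᵀ * E⁻¹ * D) * R).PosSemidef := by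
    have base : (Dᵀ * E⁻¹ * D).PosSemidef := by
      have := psdConj hE.inv.posSemidef Dᵀ; rwa [transpose_transpose] at this
    have := psdConj base R; rwa [hRsymm] at this
  have hc : ((1 : Matrix (Fin N) (Fin N) ℝ) + R * P⁻¹ * R).PosDef :=
    Matrix.PosDef.one.add_posSemidef hc_psd
  have hce : ((1 : Matrix (Fin N) (Fin N) ℝ) + R * (Dᵀ * E⁻¹ * D) * R).PosDef :=
    Matrix.PosDef.one.add_posSemidef hce_psd
  have hdiff : ((1 + R * P⁻¹ * R) - (1 + R * (Dᵀ * E⁻¹ * D) * R)).PosSemidef := by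
    have e : (1 + R * P⁻¹ * R) - (1 + R * (Dᵀ * E⁻¹ * D) * R)
        = R * (P⁻¹ - Dᵀ * E⁻¹ * D) * R := by
      rw [Matrix.mul_sub, Matrix.sub_mul]
      abel
    rw [e]
    have := psdConj hkey R; rwa [hRsymm] at this
  have hmono : (1 + R * (Dᵀ * E⁻¹ * D) * R).det ≤ (1 + R * P⁻¹ * R).det := detMono hce hdiff
  -- assemble
  have hgoal2 : (1 : Matrix (Fin N) (Fin N) ℝ) + D * (S + T) * Dᵀ = E + D * T * Dᵀ := by
    rw [hEdef, Matrix.mul_add, Matrix.add_mul]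
    abel
  simp only [secf, he, hXΔ]
  rw [hgoal2]
  rw [← hPdef, ← hEdef]
  have h1 : (1 : Matrix (Fin N) (Fin N) ℝ) + S + T = P + T := by rw [hPdef]
  rw [show (1 : Matrix (Fin N) (Fin N) ℝ) + (S + T) = P + T by rw [hPdef]; abel]
  rw [hdet1, hdet2, Real.log_mul hP.det_pos.ne' hc.det_pos.ne',
    Real.log_mul hE.det_pos.ne' hce.det_pos.ne']
  have hlog := Real.log_le_log hce.det_pos hmono
  linarith
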